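/- Suppose q₁, q₂, k₁ and k₂ are all nonvanishing on U. Then the following are equivalent: (i) q₁·k₂²·∂₁k₁ + q₂·k₁²·∂₂k₁ = 0 and q₁·k₂²·∂₁k₂ + q₂·k₁²·∂₂k₂ = 0 hold at every point of U; (ii) the function 1/k₁ + 1/k₂ is constant on U. (Proposition 6: for a surface which is not a moulding surface, the spherical images of the nets corresponding to the lines of curvature of the central surfaces are both orthogonal if and only if the sum of the principal radii of curvature is constant.) -/

import Mathlib

/-- Partial derivative in the first coordinate direction on ℝ². -/
noncomputable def pd1 (f : ℝ × ℝ → ℝ) (p : ℝ × ℝ) : ℝ := fderiv ℝ f p (1, 0)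

/-- Partial derivative in the second coordinate direction on ℝ². -/
noncomputable def pd2 (f : ℝ × ℝ → ℝ) (p : ℝ × ℝ) : ℝ := fderiv ℝ f p (0, 1)

/-- Derivative of `1/k₁ + 1/k₂`. -/
lemma hasFDerivAt_H (k₁ k₂ : ℝ × ℝ → ℝ) (p : ℝ × ℝ)
    (h1 : DifferentiableAt ℝ k₁ p) (h2 : DifferentiableAt ℝ k₂ p)
    (n1 : k₁ p ≠ 0) (n2 : k₂ p ≠ 0) :
    HasFDerivAt (fun x => 1 / k₁ x + 1 / k₂ x)
      ((-(k₁ p ^ 2)⁻¹) • fderiv ℝ k₁ p + (-(k₂ p ^ 2)⁻¹) • fderiv ℝ k₂ p) p := by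
  have H1 : HasFDerivAt (fun x => (k₁ x)⁻¹) ((-(k₁ p ^ 2)⁻¹) • fderiv ℝ k₁ p) p :=
    (hasDerivAt_inv n1).comp_hasFDerivAt p h1.hasFDerivAt
  have H2 : HasFDerivAt (fun x => (k₂ x)⁻¹) ((-(k₂ p ^ 2)⁻¹) • fderiv ℝ k₂ p) p :=
    (hasDerivAt_inv n2).comp_hasFDerivAt p h2.hasFDerivAt
  simp only [one_div]
  exact H1.add H2

/-- A function with vanishing fderiv on an open connected set is constant there. -/
lemma const_of_fderiv_zero_on {U : Set (ℝ × ℝ)} (hU : IsOpen U) (hUconn : IsConnected U)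
    (H : ℝ × ℝ → ℝ) (hdiff : ∀ p ∈ U, DifferentiableAt ℝ H p)
    (hzero : ∀ p ∈ U, fderiv ℝ H p = 0) :
    ∃ c : ℝ, ∀ p ∈ U, H p = c := by
  obtain ⟨p₀, hp₀⟩ := hUconn.nonempty
  refine ⟨H p₀, ?_⟩
  -- local constancy on balls
  have loc : ∀ p ∈ U, ∃ ε > 0, Metric.ball p ε ⊆ U ∧ ∀ q ∈ Metric.ball p ε, H q = H p := by
    intro p hp
    obtain ⟨ε, hε, hball⟩ := Metric.isOpen_iff.mp hU p hp
    refine ⟨ε, hε, hball, fun q hq => ?_⟩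
    have hconv : Convex ℝ (Metric.ball p ε) := convex_ball p ε
    have hd : DifferentiableOn ℝ H (Metric.ball p ε) :=
      fun x hx => (hdiff x (hball hx)).differentiableWithinAt
    refine hconv.is_const_of_fderivWithin_eq_zero hd (fun x hx => ?_) hq
      (Metric.mem_ball_self hε)
    rw [fderivWithin_of_isOpen Metric.isOpen_ball hx]
    exact hzero x (hball hx)
  -- clopen argument
  set A : Set (ℝ × ℝ) := {p | ∃ ε > 0, Metric.ball p ε ⊆ U ∧ ∀ q ∈ Metric.ball p ε, H q = H p₀}
  set B : Set (ℝ × ℝ) := {p | ∃ ε > 0, Metric.ball p ε ⊆ U ∧ ∀ q ∈ Metric.ball p ε, H q ≠ H p₀}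
  have hAopen : IsOpen A := by
    refine Metric.isOpen_iff.mpr fun p hp => ?_
    obtain ⟨ε, hε, hbU, hconst⟩ := hp
    refine ⟨ε, hε, fun x hx => ?_⟩
    obtain ⟨δ, hδ, hb2⟩ := Metric.isOpen_iff.mp Metric.isOpen_ball x hx
    exact ⟨δ, hδ, fun y hy => hbU (hb2 hy), fun y hy => hconst y (hb2 hy)⟩
  have hBopen : IsOpen B := by
    refine Metric.isOpen_iff.mpr fun p hp => ?_
    obtain ⟨ε, hε, hbU, hconst⟩ := hp
    refine ⟨ε, hε, fun x hx => ?_⟩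
    obtain ⟨δ, hδ, hb2⟩ := Metric.isOpen_iff.mp Metric.isOpen_ball x hx
    exact ⟨δ, hδ, fun y hy => hbU (hb2 hy), fun y hy => hconst y (hb2 hy)⟩
  have hcover : U ⊆ A ∪ B := by
    intro p hp
    obtain ⟨ε, hε, hbU, hconst⟩ := loc p hp
    by_cases h : H p = H p₀
    · exact Or.inl ⟨ε, hε, hbU, fun q hq => (hconst q hq).trans h⟩
    · exact Or.inr ⟨ε, hε, hbU, fun q hq => (hconst q hq).symm ▸ h⟩
  have hAne : (U ∩ A).Nonempty := by
    obtain ⟨ε, hε, hbU, hconst⟩ := loc p₀ hp₀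
    exact ⟨p₀, hp₀, ⟨ε, hε, hbU, hconst⟩⟩
  intro p hp
  by_contra hne
  have hBne : (U ∩ B).Nonempty := by
    obtain ⟨ε, hε, hbU, hconst⟩ := loc p hp
    exact ⟨p, hp, ⟨ε, hε, hbU, fun q hq => (hconst q hq).symm ▸ hne⟩⟩
  obtain ⟨x, _, hxA, hxB⟩ := hUconn.isPreconnected A B hAopen hBopen hcover hAne hBne
  obtain ⟨ε₁, hε₁, _, hc₁⟩ := hxA
  obtain ⟨ε₂, hε₂, _, hc₂⟩ := hxB
  exact hc₂ x (Metric.mem_ball_self hε₂) (hc₁ x (Metric.mem_ball_self hε₁))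

theorem stmt_2 (U : Set (ℝ × ℝ)) (hU : IsOpen U) (hUconn : IsConnected U)
    (k₁ k₂ q₁ q₂ : ℝ × ℝ → ℝ)
    (hk₁ : ∀ p ∈ U, DifferentiableAt ℝ k₁ p)
    (hk₂ : ∀ p ∈ U, DifferentiableAt ℝ k₂ p)
    (hq₁ : ∀ p ∈ U, DifferentiableAt ℝ q₁ p)
    (hq₂ : ∀ p ∈ U, DifferentiableAt ℝ q₂ p)
    (codazzi₁ : ∀ p ∈ U, pd2 k₁ p = q₁ p * (k₁ p - k₂ p))
    (codazzi₂ : ∀ p ∈ U, pd1 k₂ p = q₂ p * (k₁ p - k₂ p))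
    (hq₁ne : ∀ p ∈ U, q₁ p ≠ 0)
    (hq₂ne : ∀ p ∈ U, q₂ p ≠ 0)
    (hk₁ne : ∀ p ∈ U, k₁ p ≠ 0)
    (hk₂ne : ∀ p ∈ U, k₂ p ≠ 0) :
    (∀ p ∈ U, q₁ p * (k₂ p)^2 * pd1 k₁ p + q₂ p * (k₁ p)^2 * pd2 k₁ p = 0 ∧
              q₁ p * (k₂ p)^2 * pd1 k₂ p + q₂ p * (k₁ p)^2 * pd2 k₂ p = 0) ↔
    (∃ c : ℝ, ∀ p ∈ U, 1 / k₁ p + 1 / k₂ p = c) := by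
  set H : ℝ × ℝ → ℝ := fun x => 1 / k₁ x + 1 / k₂ x with hH
  have hDH : ∀ p ∈ U, HasFDerivAt H
      ((-(k₁ p ^ 2)⁻¹) • fderiv ℝ k₁ p + (-(k₂ p ^ 2)⁻¹) • fderiv ℝ k₂ p) p :=
    fun p hp => hasFDerivAt_H k₁ k₂ p (hk₁ p hp) (hk₂ p hp) (hk₁ne p hp) (hk₂ne p hp)
  -- pointwise equivalence: (i) at p ↔ fderiv H p = 0
  have key : ∀ p ∈ U,
      ((q₁ p * (k₂ p)^2 * pd1 k₁ p + q₂ p * (k₁ p)^2 * pd2 k₁ p = 0 ∧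
        q₁ p * (k₂ p)^2 * pd1 k₂ p + q₂ p * (k₁ p)^2 * pd2 k₂ p = 0) ↔
      fderiv ℝ H p = 0) := by
    intro p hp
    have hk1 := hk₁ne p hp; have hk2 := hk₂ne p hp
    have hq1 := hq₁ne p hp; have hq2 := hq₂ne p hp
    have hfd := (hDH p hp).fderiv
    have hpd1 : pd1 H p = -(k₁ p ^ 2)⁻¹ * pd1 k₁ p + -(k₂ p ^ 2)⁻¹ * pd1 k₂ p := by
      simp [pd1, hfd]
    have hpd2 : pd2 H p = -(k₁ p ^ 2)⁻¹ * pd2 k₁ p + -(k₂ p ^ 2)⁻¹ * pd2 k₂ p := by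
      simp [pd2, hfd]
    have hc1 := codazzi₁ p hp
    have hc2 := codazzi₂ p hp
    constructor
    · rintro ⟨h1, h2⟩
      -- derive pd1 H p = 0 and pd2 H p = 0
      have e1 : (k₂ p)^2 * pd1 k₁ p + (k₁ p)^2 * pd1 k₂ p = 0 := by
        have key1 : q₁ p * ((k₂ p)^2 * pd1 k₁ p + (k₁ p)^2 * pd1 k₂ p) = 0 := by
          linear_combination h1 - q₂ p * k₁ p ^ 2 * hc1 + q₁ p * k₁ p ^ 2 * hc2
        rcases mul_eq_zero.mp key1 with h | h
        · exact absurd h hq1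
        · exact h
      have e2 : (k₂ p)^2 * pd2 k₁ p + (k₁ p)^2 * pd2 k₂ p = 0 := by
        have key2 : q₂ p * ((k₂ p)^2 * pd2 k₁ p + (k₁ p)^2 * pd2 k₂ p) = 0 := by
          linear_combination h2 - q₁ p * k₂ p ^ 2 * hc2 + q₂ p * k₂ p ^ 2 * hc1
        rcases mul_eq_zero.mp key2 with h | h
        · exact absurd h hq2
        · exact h
      -- now fderiv H p = 0
      have z1 : pd1 H p = 0 := by
        rw [hpd1]
        field_simp
        linear_combination (-1 : ℝ) * e1
      have z2 : pd2 H p = 0 := by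
        rw [hpd2]
        field_simp
        linear_combination (-1 : ℝ) * e2
      apply ContinuousLinearMap.ext
      intro v
      have hv : v = v.1 • ((1 : ℝ), (0 : ℝ)) + v.2 • ((0 : ℝ), (1 : ℝ)) := by
        simp [Prod.ext_iff]
      rw [hv]
      simp only [map_add, map_smul, ContinuousLinearMap.zero_apply]
      have z1' : fderiv ℝ H p (1, 0) = 0 := z1
      have z2' : fderiv ℝ H p (0, 1) = 0 := z2
      rw [z1', z2']
    · intro hz
      have z1 : pd1 H p = 0 := by simp [pd1, hz]
      have z2 : pd2 H p = 0 := by simp [pd2, hz]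
      rw [hpd1] at z1
      rw [hpd2] at z2
      have e1 : (k₂ p)^2 * pd1 k₁ p + (k₁ p)^2 * pd1 k₂ p = 0 := by
        field_simp at z1
        linarith
      have e2 : (k₂ p)^2 * pd2 k₁ p + (k₁ p)^2 * pd2 k₂ p = 0 := by
        field_simp at z2
        linarith
      constructor
      · rw [hc1]
        have : q₂ p * (k₁ p - k₂ p) = pd1 k₂ p := hc2.symm
        calc q₁ p * (k₂ p)^2 * pd1 k₁ p + q₂ p * (k₁ p)^2 * (q₁ p * (k₁ p - k₂ p))
            = q₁ p * ((k₂ p)^2 * pd1 k₁ p + (k₁ p)^2 * (q₂ p * (k₁ p - k₂ p))) := by ring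
          _ = q₁ p * ((k₂ p)^2 * pd1 k₁ p + (k₁ p)^2 * pd1 k₂ p) := by rw [this]
          _ = 0 := by rw [e1]; ring
      · rw [hc2]
        have : q₁ p * (k₁ p - k₂ p) = pd2 k₁ p := hc1.symm
        calc q₁ p * (k₂ p)^2 * (q₂ p * (k₁ p - k₂ p)) + q₂ p * (k₁ p)^2 * pd2 k₂ p
            = q₂ p * ((k₂ p)^2 * (q₁ p * (k₁ p - k₂ p)) + (k₁ p)^2 * pd2 k₂ p) := by ring
          _ = q₂ p * ((k₂ p)^2 * pd2 k₁ p + (k₁ p)^2 * pd2 k₂ p) := by rw [this]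
          _ = 0 := by rw [e2]; ring
  constructor
  · intro h
    refine const_of_fderiv_zero_on hU hUconn H
      (fun p hp => (hDH p hp).differentiableAt) (fun p hp => (key p hp).mp (h p hp))
  · rintro ⟨c, hc⟩ p hp
    refine (key p hp).mpr ?_
    have hev : H =ᶠ[nhds p] fun _ => c := by
      filter_upwards [hU.mem_nhds hp] with x hx using hc x hx
    rw [hev.fderiv_eq]
    exact fderiv_const_apply c
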